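/- Let G be a bipartite graph with biparts V and W where every edge wv (w ∈ W, v ∈ V) is assigned the list L(wv) = {1, …, deg(v)}. Then G is V-choosable if and only if G has a proper L-edge-colouring. -/

import Mathlib

open SimpleGraph Sum

/-- Two edges of `G` are adjacent if they are distinct edges sharing a vertex. -/
def EdgeAdj {V : Type*} (G : SimpleGraph V) (e f : Sym2 V) : Prop :=
  e ∈ G.edgeSet ∧ f ∈ G.edgeSet ∧ e ≠ f ∧ ∃ v, v ∈ e ∧ v ∈ f

/-- A proper edge-colouring of `G` choosing each edge's colour from its list. -/
def IsListEdgeColoring {V : Type*} (G : SimpleGraph V) (L : Sym2 V → Finset ℕ)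
    (C : Sym2 V → ℕ) : Prop :=
  (∀ e ∈ G.edgeSet, C e ∈ L e) ∧ ∀ e f, EdgeAdj G e f → C e ≠ C f

/-- A graph on `A ⊕ B` is bipartite with parts `A` and `B` if all edges go
between the two parts. -/
def IsBipartiteSum {A B : Type*} (G : SimpleGraph (A ⊕ B)) : Prop :=
  (∀ a a' : A, ¬G.Adj (Sum.inl a) (Sum.inl a')) ∧
  (∀ b b' : B, ¬G.Adj (Sum.inr b) (Sum.inr b'))

/-- A bipartite graph (parts `A`, `B`) is `A`-choosable if every list assignment
with `|L(ab)| ≥ deg(a)` for all edges `ab` (`a ∈ A`) admits a proper list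
edge-colouring. -/
def AChoosable {A B : Type*} (G : SimpleGraph (A ⊕ B)) : Prop :=
  ∀ L : Sym2 (A ⊕ B) → Finset ℕ,
    (∀ (a : A) (b : B), G.Adj (Sum.inl a) (Sum.inr b) →
      (G.neighborSet (Sum.inl a)).ncard ≤ (L s(Sum.inl a, Sum.inr b)).card) →
    ∃ C, IsListEdgeColoring G L C

/-- The induced subgraph `G[W' ∪ N(W')]`, realised as the subgraph of `G`
consisting of all edges whose `B`-endpoint lies in `W'`. -/
def restrictB {A B : Type*} (G : SimpleGraph (A ⊕ B)) (W' : Set B) :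
    SimpleGraph (A ⊕ B) where
  Adj x y := G.Adj x y ∧ (∀ b, x = Sum.inr b → b ∈ W') ∧ (∀ b, y = Sum.inr b → b ∈ W')
  symm := by
    constructor
    intro x y h
    exact ⟨h.1.symm, h.2.2, h.2.1⟩
  loopless := by
    constructor
    intro x h
    exact G.irrefl h.1

section GalvinAux

variable {A B : Type*} [DecidableEq A] [DecidableEq B]

/-- properness of a colouring on a set of bipartite edges -/
private def Pro (C : A × B → ℕ) (E : Finset (A × B)) : Prop :=
  ∀ e ∈ E, ∀ f ∈ E, e ≠ f → (e.1 = f.1 ∨ e.2 = f.2) → C e ≠ C f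

/-- favourite edges: maximal colour among edges with the same first coordinate -/
private def Fav (C : A × B → ℕ) (E' : Finset (A × B)) : Finset (A × B) :=
  E'.filter (fun f => ∀ g ∈ E', g.1 = f.1 → C g ≤ C f)

private lemma kernelStable (C : A × B → ℕ) (E E' : Finset (A × B)) (hPro : Pro C E)
    (hsub : E' ⊆ E)
    (hInv : ∀ e ∈ E, e ∉ E' → ∃ f ∈ E', f.2 = e.2 ∧ C f < C e ∧
      ∀ g ∈ E', g.1 = f.1 → C g ≤ C f)
    (hstab : ∀ e ∈ Fav C E', ∀ f ∈ Fav C E', e ≠ f → e.2 ≠ f.2) :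
    ∃ K ⊆ E', (∀ k ∈ K, ∀ k' ∈ K, k ≠ k' → k.1 ≠ k'.1 ∧ k.2 ≠ k'.2) ∧
      ∀ e ∈ E, e ∉ K → ∃ k ∈ K, (k.1 = e.1 ∧ C e < C k) ∨ (k.2 = e.2 ∧ C k < C e) := by
  refine ⟨Fav C E', Finset.filter_subset _ _, ?_, ?_⟩
  · intro k hk k' hk' hne
    have hkE' := (Finset.mem_filter.1 hk).1
    have hk'E' := (Finset.mem_filter.1 hk').1
    refine ⟨?_, hstab k hk k' hk' hne⟩
    intro h1
    have h2 := (Finset.mem_filter.1 hk).2 k' hk'E' h1.symm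
    have h3 := (Finset.mem_filter.1 hk').2 k hkE' h1
    exact hPro k (hsub hkE') k' (hsub hk'E') hne (Or.inl h1) (le_antisymm h3 h2)
  · intro e heE heK
    by_cases heE' : e ∈ E'
    · obtain ⟨k, hk, hmax⟩ := Finset.exists_max_image (E'.filter (fun f => f.1 = e.1)) C
        ⟨e, Finset.mem_filter.2 ⟨heE', rfl⟩⟩
      have hkE' := (Finset.mem_filter.1 hk).1
      have hk1 : k.1 = e.1 := (Finset.mem_filter.1 hk).2
      have hkFav : k ∈ Fav C E' := by
        refine Finset.mem_filter.2 ⟨hkE', fun g hg hg1 => ?_⟩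
        exact hmax g (Finset.mem_filter.2 ⟨hg, hg1.trans hk1⟩)
      have hne : e ≠ k := fun h => heK (h ▸ hkFav)
      have hle : C e ≤ C k := hmax e (Finset.mem_filter.2 ⟨heE', rfl⟩)
      have hneC : C e ≠ C k := hPro e heE k (hsub hkE') hne (Or.inl hk1.symm)
      exact ⟨k, hkFav, Or.inl ⟨hk1, lt_of_le_of_ne hle hneC⟩⟩
    · obtain ⟨f, hf, hf2, hflt, hfmax⟩ := hInv e heE heE'
      exact ⟨f, Finset.mem_filter.2 ⟨hf, hfmax⟩, Or.inr ⟨hf2, hflt⟩⟩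

private lemma kernelAux (C : A × B → ℕ) (E : Finset (A × B)) (hPro : Pro C E) :
    ∀ n (E' : Finset (A × B)), E' ⊆ E → E'.card ≤ n →
    (∀ e ∈ E, e ∉ E' → ∃ f ∈ E', f.2 = e.2 ∧ C f < C e ∧
      ∀ g ∈ E', g.1 = f.1 → C g ≤ C f) →
    ∃ K ⊆ E', (∀ k ∈ K, ∀ k' ∈ K, k ≠ k' → k.1 ≠ k'.1 ∧ k.2 ≠ k'.2) ∧
      ∀ e ∈ E, e ∉ K → ∃ k ∈ K, (k.1 = e.1 ∧ C e < C k) ∨ (k.2 = e.2 ∧ C k < C e) := by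
  intro n
  induction n with
  | zero =>
    intro E' hsub hcard hInv
    have hE' : E' = ∅ := Finset.card_eq_zero.1 (Nat.le_zero.1 hcard)
    subst hE'
    apply kernelStable C E ∅ hPro hsub hInv
    intro e he
    simp [Fav] at he
  | succ n ih =>
    intro E' hsub hcard hInv
    by_cases hp : ∃ e ∈ Fav C E', ∃ f ∈ Fav C E', e ≠ f ∧ e.2 = f.2
    · obtain ⟨e, he, f, hf, hef, h2⟩ := hp
      have key : ∀ e ∈ Fav C E', ∀ f ∈ Fav C E', e ≠ f → e.2 = f.2 → C e < C f →
          ∃ K ⊆ E', (∀ k ∈ K, ∀ k' ∈ K, k ≠ k' → k.1 ≠ k'.1 ∧ k.2 ≠ k'.2) ∧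
            ∀ e ∈ E, e ∉ K →
              ∃ k ∈ K, (k.1 = e.1 ∧ C e < C k) ∨ (k.2 = e.2 ∧ C k < C e) := by
        clear hef h2 he hf
        intro e he f hf hef h2 hlt
        have heE' : e ∈ E' := (Finset.mem_filter.1 he).1
        have hfE' : f ∈ E' := (Finset.mem_filter.1 hf).1
        have hsub' : E'.erase f ⊆ E := (Finset.erase_subset _ _).trans hsub
        have hcard' : (E'.erase f).card ≤ n := by
          have h1 := Finset.card_erase_of_mem hfE'
          have h2 : 1 ≤ E'.card := Finset.card_pos.2 ⟨f, hfE'⟩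
          omega
        have heE'' : e ∈ E'.erase f := Finset.mem_erase.2 ⟨hef, heE'⟩
        have hefav : ∀ g ∈ E'.erase f, g.1 = e.1 → C g ≤ C e :=
          fun g hg hg1 => (Finset.mem_filter.1 he).2 g (Finset.mem_of_mem_erase hg) hg1
        have hInv' : ∀ e0 ∈ E, e0 ∉ E'.erase f → ∃ f0 ∈ E'.erase f, f0.2 = e0.2 ∧
            C f0 < C e0 ∧ ∀ g ∈ E'.erase f, g.1 = f0.1 → C g ≤ C f0 := by
          intro e0 he0 hne0
          by_cases h0 : e0 = f
          · subst h0
            exact ⟨e, heE'', h2, hlt, hefav⟩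
          · have he0E' : e0 ∉ E' := fun h => hne0 (Finset.mem_erase.2 ⟨h0, h⟩)
            obtain ⟨f0, hf0, hf02, hf0lt, hf0max⟩ := hInv e0 he0 he0E'
            by_cases h1 : f0 = f
            · subst h1
              exact ⟨e, heE'', h2.trans hf02, hlt.trans hf0lt, hefav⟩
            · exact ⟨f0, Finset.mem_erase.2 ⟨h1, hf0⟩, hf02, hf0lt,
                fun g hg => hf0max g (Finset.mem_of_mem_erase hg)⟩
        obtain ⟨K, hK1, hK2, hK3⟩ := ih (E'.erase f) hsub' hcard' hInv'
        exact ⟨K, hK1.trans (Finset.erase_subset _ _), hK2, hK3⟩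
      have hCne : C e ≠ C f :=
        hPro e (hsub (Finset.mem_filter.1 he).1) f (hsub (Finset.mem_filter.1 hf).1)
          hef (Or.inr h2)
      rcases lt_or_gt_of_ne hCne with h | h
      · exact key e he f hf hef h2 h
      · exact key f hf e he (Ne.symm hef) h2.symm h
    · push_neg at hp
      exact kernelStable C E E' hPro hsub hInv hp

private lemma galvin (C : A × B → ℕ) :
    ∀ n (E : Finset (A × B)), E.card ≤ n → Pro C E →
    ∀ L' : A × B → Finset ℕ,
    (∀ e ∈ E, (E.filter (fun f => (f.1 = e.1 ∧ C e < C f) ∨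
        (f ≠ e ∧ f.2 = e.2 ∧ C f < C e))).card < (L' e).card) →
    ∃ c : A × B → ℕ, (∀ e ∈ E, c e ∈ L' e) ∧
      ∀ e ∈ E, ∀ f ∈ E, e ≠ f → (e.1 = f.1 ∨ e.2 = f.2) → c e ≠ c f := by
  intro n
  induction n with
  | zero =>
    intro E hcard _ L' _
    have hE : E = ∅ := Finset.card_eq_zero.1 (Nat.le_zero.1 hcard)
    subst hE
    exact ⟨fun _ => 0, by simp, by simp⟩
  | succ n ih =>
    intro E hcard hPro L' hL'
    rcases Finset.eq_empty_or_nonempty E with rfl | ⟨e0, he0⟩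
    · exact ⟨fun _ => 0, by simp, by simp⟩
    have hL0 : (L' e0).Nonempty := Finset.card_pos.1 (lt_of_le_of_lt (Nat.zero_le _) (hL' e0 he0))
    obtain ⟨α, hα⟩ := hL0
    set F := E.filter (fun e => α ∈ L' e) with hF
    have hFsub : F ⊆ E := Finset.filter_subset _ _
    have hProF : Pro C F := fun e he f hf => hPro e (hFsub he) f (hFsub hf)
    obtain ⟨K, hKsub, hKmatch, hKdom⟩ := kernelAux C F hProF F.card F subset_rfl le_rfl
      (fun e he h => absurd he h)
    have hKE : K ⊆ E := hKsub.trans hFsub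
    have hKne : K.Nonempty := by
      have he0F : e0 ∈ F := Finset.mem_filter.2 ⟨he0, hα⟩
      by_cases h : e0 ∈ K
      · exact ⟨e0, h⟩
      · obtain ⟨k, hk, _⟩ := hKdom e0 he0F h
        exact ⟨k, hk⟩
    set E2 := E \ K with hE2
    have hE2sub : E2 ⊆ E := Finset.sdiff_subset
    have hE2card : E2.card ≤ n := by
      have hss := Finset.card_lt_card (Finset.sdiff_ssubset hKE hKne)
      rw [← hE2] at hss
      omega
    have hProE2 : Pro C E2 := fun e he f hf => hPro e (hE2sub he) f (hE2sub hf)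
    have hbound : ∀ e ∈ E2, (E2.filter (fun f => (f.1 = e.1 ∧ C e < C f) ∨
        (f ≠ e ∧ f.2 = e.2 ∧ C f < C e))).card < ((L' e).erase α).card := by
      intro e he
      have heE : e ∈ E := (Finset.mem_sdiff.1 he).1
      have heK : e ∉ K := (Finset.mem_sdiff.1 he).2
      have hfsub : E2.filter (fun f => (f.1 = e.1 ∧ C e < C f) ∨
          (f ≠ e ∧ f.2 = e.2 ∧ C f < C e)) ⊆ E.filter (fun f => (f.1 = e.1 ∧ C e < C f) ∨
          (f ≠ e ∧ f.2 = e.2 ∧ C f < C e)) := Finset.filter_subset_filter _ hE2sub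
      by_cases hαe : α ∈ L' e
      · have heF : e ∈ F := Finset.mem_filter.2 ⟨heE, hαe⟩
        obtain ⟨k, hkK, hrel⟩ := hKdom e heF heK
        have hkne : k ≠ e := fun h => heK (h ▸ hkK)
        have hkmem : k ∈ E.filter (fun f => (f.1 = e.1 ∧ C e < C f) ∨
            (f ≠ e ∧ f.2 = e.2 ∧ C f < C e)) := by
          refine Finset.mem_filter.2 ⟨hKE hkK, ?_⟩
          rcases hrel with h | h
          · exact Or.inl h
          · exact Or.inr ⟨hkne, h.1, h.2⟩
        have hss : E2.filter (fun f => (f.1 = e.1 ∧ C e < C f) ∨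
            (f ≠ e ∧ f.2 = e.2 ∧ C f < C e)) ⊆ (E.filter (fun f => (f.1 = e.1 ∧ C e < C f) ∨
            (f ≠ e ∧ f.2 = e.2 ∧ C f < C e))).erase k := by
          intro x hx
          refine Finset.mem_erase.2 ⟨?_, hfsub hx⟩
          intro h
          subst h
          exact ((Finset.mem_sdiff.1 ((Finset.filter_subset _ _) hx)).2) hkK
        have h1 := Finset.card_le_card hss
        rw [Finset.card_erase_of_mem hkmem] at h1
        have h2 := hL' e heE
        have h3 := Finset.card_erase_of_mem hαe
        have h4 : 1 ≤ (L' e).card := Finset.card_pos.2 ⟨α, hαe⟩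
        have h5 : 1 ≤ (E.filter (fun f => (f.1 = e.1 ∧ C e < C f) ∨
            (f ≠ e ∧ f.2 = e.2 ∧ C f < C e))).card := Finset.card_pos.2 ⟨k, hkmem⟩
        omega
      · have h3 : ((L' e).erase α).card = (L' e).card := by
          rw [Finset.erase_eq_of_notMem hαe]
        have h1 := Finset.card_le_card hfsub
        have h2 := hL' e heE
        omega
    obtain ⟨c, hc1, hc2⟩ := ih E2 hE2card hProE2 (fun e => (L' e).erase α) hbound
    refine ⟨fun e => if e ∈ K then α else c e, ?_, ?_⟩
    · intro e he
      by_cases h : e ∈ K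
      · simpa [h] using (Finset.mem_filter.1 (hKsub h)).2
      · simpa [h] using Finset.mem_of_mem_erase (hc1 e (Finset.mem_sdiff.2 ⟨he, h⟩))
    · intro e he f hf hne hadj
      by_cases h1 : e ∈ K <;> by_cases h2 : f ∈ K
      · rcases hKmatch e h1 f h2 hne with ⟨u, v⟩
        rcases hadj with h | h
        · exact absurd h u
        · exact absurd h v
      · simp only [h1, h2, if_pos, if_neg, if_true, if_false]
        have := hc1 f (Finset.mem_sdiff.2 ⟨hf, h2⟩)
        exact fun h => (Finset.ne_of_mem_erase this) h.symm
      · simp only [h1, h2, if_pos, if_neg, if_true, if_false]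
        have := hc1 e (Finset.mem_sdiff.2 ⟨he, h1⟩)
        exact Finset.ne_of_mem_erase this
      · simp only [h1, h2, if_neg, if_false]
        exact hc2 e (Finset.mem_sdiff.2 ⟨he, h1⟩) f (Finset.mem_sdiff.2 ⟨hf, h2⟩) hne hadj

end GalvinAux

theorem stmt6 {A B : Type*} [Fintype A] [Fintype B]
    (G : SimpleGraph (A ⊕ B)) (hbip : IsBipartiteSum G)
    (L : Sym2 (A ⊕ B) → Finset ℕ)
    (hL : ∀ (a : A) (b : B), G.Adj (Sum.inl a) (Sum.inr b) →
      L s(Sum.inl a, Sum.inr b) = Finset.Icc 1 ((G.neighborSet (Sum.inl a)).ncard)) :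
    AChoosable G ↔ ∃ C, IsListEdgeColoring G L C := by
  classical
  have pair_eq : ∀ (a a' : A) (b b' : B),
      s(Sum.inl a, (Sum.inr b : A ⊕ B)) = s(Sum.inl a', Sum.inr b') ↔ a = a' ∧ b = b' := by
    intro a a' b b'
    simp [Sym2.eq_iff]
  have repr : ∀ s ∈ G.edgeSet, ∃ a b, s = s(Sum.inl a, Sum.inr b) ∧
      G.Adj (Sum.inl a) (Sum.inr b) := by
    intro s
    induction s using Sym2.ind with
    | _ x y =>
      intro hs
      rw [SimpleGraph.mem_edgeSet] at hs
      cases x with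
      | inl a =>
        cases y with
        | inl a' => exact absurd hs (hbip.1 a a')
        | inr b => exact ⟨a, b, rfl, hs⟩
      | inr b =>
        cases y with
        | inl a => exact ⟨a, b, Sym2.eq_swap, hs.symm⟩
        | inr b' => exact absurd hs (hbip.2 b b')
  constructor
  · intro h
    apply h L
    intro a b hab
    rw [hL a b hab, Nat.card_Icc]
    omega
  · rintro ⟨C0, hC0mem, hC0adj⟩
    intro M hM
    set E : Finset (A × B) := Finset.univ.filter (fun p => G.Adj (inl p.1) (inr p.2)) with hE
    have hmemE : ∀ p : A × B, p ∈ E ↔ G.Adj (inl p.1) (inr p.2) := by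
      intro p; simp [hE]
    have hadjE : ∀ p : A × B, p ∈ E → G.Adj (inl p.1) (inr p.2) := fun p => (hmemE p).1
    set C : A × B → ℕ := fun p => C0 s(inl p.1, inr p.2) with hC
    have hdeg : ∀ a : A,
        (G.neighborSet (inl a)).ncard = (E.filter (fun f => f.1 = a)).card := by
      intro a
      have himage : (G.neighborSet (Sum.inl a) : Set (A ⊕ B)) =
          ↑((E.filter (fun f => f.1 = a)).image (fun p => (Sum.inr p.2 : A ⊕ B))) := by
        ext x
        cases x with
        | inl a' =>
          simp only [mem_neighborSet, Finset.coe_image, Set.mem_image, Finset.mem_coe,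
            Finset.mem_filter]
          constructor
          · intro h; exact absurd h (hbip.1 a a')
          · rintro ⟨p, _, h⟩; exact absurd h (by simp)
        | inr b =>
          simp only [mem_neighborSet, Finset.coe_image, Set.mem_image, Finset.mem_coe,
            Finset.mem_filter]
          constructor
          · intro h
            exact ⟨(a, b), ⟨(hmemE (a, b)).2 h, rfl⟩, rfl⟩
          · rintro ⟨p, ⟨hp, hp1⟩, h⟩
            have h2 : p.2 = b := by simpa using h
            rw [hmemE] at hp
            rw [← hp1, ← h2]
            exact hp
      rw [himage, Set.ncard_coe_finset, Finset.card_image_of_injOn]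
      intro p hp q hq hpq
      have h2 : p.2 = q.2 := by simpa using hpq
      have hp1 : p.1 = a := (Finset.mem_filter.1 hp).2
      have hq1 : q.1 = a := (Finset.mem_filter.1 hq).2
      exact Prod.ext (hp1.trans hq1.symm) h2
    have hPro : Pro C E := by
      intro e he f hf hne hshare
      apply hC0adj
      refine ⟨G.mem_edgeSet.2 (hadjE e he), G.mem_edgeSet.2 (hadjE f hf), ?_, ?_⟩
      · intro h
        obtain ⟨h1, h2⟩ := (pair_eq e.1 f.1 e.2 f.2).1 h
        exact hne (Prod.ext h1 h2)
      · rcases hshare with h | h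
        · exact ⟨inl e.1, Sym2.mem_iff.2 (Or.inl rfl), Sym2.mem_iff.2 (Or.inl (by rw [h]))⟩
        · exact ⟨inr e.2, Sym2.mem_iff.2 (Or.inr rfl), Sym2.mem_iff.2 (Or.inr (by rw [h]))⟩
    have hCmem : ∀ e ∈ E, C e ∈ Finset.Icc 1 ((G.neighborSet (inl e.1)).ncard) := by
      intro e he
      have hadj := hadjE e he
      have h := hC0mem s(inl e.1, inr e.2) (G.mem_edgeSet.2 hadj)
      rwa [hL e.1 e.2 hadj] at h
    have hcards : ∀ e ∈ E, ∀ X : Finset (A × B),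
        (∀ f, f ∈ X ↔ f ∈ E ∧ ((f.1 = e.1 ∧ C e < C f) ∨ (f ≠ e ∧ f.2 = e.2 ∧ C f < C e))) →
        X.card < (M s(Sum.inl e.1, Sum.inr e.2)).card := by
      intro e he X hX
      obtain ⟨h1ce, h2ce⟩ := Finset.mem_Icc.1 (hCmem e he)
      set d := (G.neighborSet (inl e.1)).ncard with hd
      set S := E.filter (fun f => f.1 = e.1) with hS
      have hScard : S.card = d := by rw [hS, hd]; exact (hdeg e.1).symm
      have hinjS : Set.InjOn C ↑S := by
        intro p hp q hq hpq
        by_contra hne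
        have hp' : p ∈ E := (Finset.filter_subset _ _) hp
        have hq' : q ∈ E := (Finset.filter_subset _ _) hq
        have hp1 : p.1 = e.1 := (Finset.mem_filter.1 hp).2
        have hq1 : q.1 = e.1 := (Finset.mem_filter.1 hq).2
        exact hPro p hp' q hq' hne (Or.inl (hp1.trans hq1.symm)) hpq
      have hsubS : S.image C ⊆ Finset.Icc 1 d := by
        intro v hv
        obtain ⟨f, hf, rfl⟩ := Finset.mem_image.1 hv
        have hf1 : f.1 = e.1 := (Finset.mem_filter.1 hf).2
        have h := hCmem f ((Finset.filter_subset _ _) hf)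
        rwa [hf1] at h
      have himg : S.image C = Finset.Icc 1 d := by
        apply Finset.eq_of_subset_of_card_le hsubS
        rw [Finset.card_image_of_injOn hinjS, hScard, Nat.card_Icc]
        omega
      have count1 : (S.filter (fun f => C e < C f)).card = d - C e := by
        have key : (S.filter (fun f => C e < C f)).image C
            = (S.image C).filter (fun v => C e < v) :=
          (Finset.filter_image (f := C) (s := S) (p := fun v => C e < v)).symm
        have hinj' : Set.InjOn C ↑(S.filter (fun f => C e < C f)) :=
          hinjS.mono (Finset.coe_subset.2 (Finset.filter_subset _ S))
        have hc := Finset.card_image_of_injOn hinj'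
        rw [key, himg] at hc
        rw [← hc]
        have hIoc : Finset.filter (fun v => C e < v) (Finset.Icc 1 d) = Finset.Ioc (C e) d := by
          ext v
          simp only [Finset.mem_filter, Finset.mem_Icc, Finset.mem_Ioc]
          omega
        rw [hIoc, Nat.card_Ioc]
      have count2 : (E.filter (fun f => f ≠ e ∧ f.2 = e.2 ∧ C f < C e)).card ≤ C e - 1 := by
        have hle : (E.filter (fun f => f ≠ e ∧ f.2 = e.2 ∧ C f < C e)).card
            ≤ (Finset.Ico 1 (C e)).card := by
          refine Finset.card_le_card_of_injOn C ?_ ?_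
          · intro f hf
            obtain ⟨hfE, _, _, hlt⟩ := Finset.mem_filter.1 hf
            have h1 := (Finset.mem_Icc.1 (hCmem f hfE)).1
            exact Finset.mem_Ico.2 ⟨h1, hlt⟩
          · intro p hp q hq hpq
            by_contra hne
            have hp' := Finset.mem_filter.1 hp
            have hq' := Finset.mem_filter.1 hq
            exact hPro p hp'.1 q hq'.1 hne (Or.inr (hp'.2.2.1.trans hq'.2.2.1.symm)) hpq
        rwa [Nat.card_Ico] at hle
      have hXsub : X ⊆ (S.filter (fun f => C e < C f))
          ∪ (E.filter (fun f => f ≠ e ∧ f.2 = e.2 ∧ C f < C e)) := by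
        intro f hf
        obtain ⟨hfE, hor⟩ := (hX f).1 hf
        rcases hor with ⟨h1, h2⟩ | h
        · exact Finset.mem_union_left _
            (Finset.mem_filter.2 ⟨Finset.mem_filter.2 ⟨hfE, h1⟩, h2⟩)
        · exact Finset.mem_union_right _ (Finset.mem_filter.2 ⟨hfE, h⟩)
      have hXcard : X.card ≤ (d - C e) + (C e - 1) := by
        calc X.card ≤ _ := Finset.card_le_card hXsub
        _ ≤ _ := Finset.card_union_le _ _
        _ ≤ (d - C e) + (C e - 1) := by rw [count1]; omega
      have hMcard := hM e.1 e.2 (hadjE e he)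
      rw [← hd] at hMcard
      omega
    obtain ⟨c, hc1, hc2⟩ := galvin C E.card E le_rfl hPro
      (fun p => M s(Sum.inl p.1, Sum.inr p.2))
      (by intro e he; exact hcards e he _ (fun f => Finset.mem_filter))
    refine ⟨Sym2.lift ⟨fun x y =>
      match x, y with
      | inl a, inr b => c (a, b)
      | inr b, inl a => c (a, b)
      | inl _, inl _ => 0
      | inr _, inr _ => 0, ?_⟩, ?_, ?_⟩
    · intro x y
      cases x <;> cases y <;> rfl
    · intro s hs
      obtain ⟨a, b, rfl, hadj⟩ := repr s hs
      simp only [Sym2.lift_mk]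
      exact hc1 (a, b) ((hmemE (a, b)).2 hadj)
    · rintro s t ⟨hs, ht, hst, v, hvs, hvt⟩
      obtain ⟨a, b, rfl, hadj⟩ := repr s hs
      obtain ⟨a', b', rfl, hadj'⟩ := repr t ht
      have hor : a = a' ∨ b = b' := by
        rcases Sym2.mem_iff.1 hvs with h1 | h1 <;> rcases Sym2.mem_iff.1 hvt with h2 | h2
        · exact Or.inl (Sum.inl_injective (h1.symm.trans h2))
        · exact absurd (h1.symm.trans h2) (by simp)
        · exact absurd (h1.symm.trans h2) (by simp)
        · exact Or.inr (Sum.inr_injective (h1.symm.trans h2))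
      have hne : (a, b) ≠ (a', b') := by
        intro h
        injection h with h1 h2
        exact hst (by rw [h1, h2])
      simp only [Sym2.lift_mk]
      exact hc2 (a, b) ((hmemE (a, b)).2 hadj) (a', b') ((hmemE (a', b')).2 hadj') hne hor
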